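/- Let Ω, Ω̃ ⊆ ℝ² be open sets, φ : Ω → Ω̃ a C¹ diffeomorphism with everywhere positive Jacobian determinant, and A : Ω → (real symmetric 2×2 matrices) agreed with φ. Suppose M > 0 satisfies det Dφ(z) ≥ 1/M for every z ∈ Ω (equivalently |det D(φ⁻¹)(w)| ≤ M on Ω̃), and suppose λ > 0 is such that for every continuously differentiable g : ℝ² → ℝ with compact support in Ω̃, ∫_{Ω̃} |g(w)|² dw ≤ (1/λ) ∫_{Ω̃} |∇g(w)|² dw. Then for every continuously differentiable f : ℝ² → ℝ with compact support in Ω, ∫_Ω |f(z)|² dz ≤ (M/λ) ∫_Ω ⟨A(z)∇f(z), ∇f(z)⟩ dz. -/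

import Mathlib

open MeasureTheory Set Matrix

noncomputable section

lemma det_toEuclideanCLM' {n : Type*} [Fintype n] [DecidableEq n] (M : Matrix n n ℝ) :
    (Matrix.toEuclideanCLM (𝕜 := ℝ) M : EuclideanSpace ℝ n →L[ℝ] EuclideanSpace ℝ n).det
      = M.det := by
  have h : ((Matrix.toEuclideanCLM (𝕜 := ℝ) M : EuclideanSpace ℝ n →L[ℝ] EuclideanSpace ℝ n) :
      EuclideanSpace ℝ n →ₗ[ℝ] EuclideanSpace ℝ n) = Matrix.toEuclideanLin M :=
    Matrix.coe_toEuclideanCLM_eq_toEuclideanLin M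
  rw [ContinuousLinearMap.det, h, Matrix.toEuclideanLin_eq_toLin, LinearMap.det_toLin]

lemma inner_grad' {E : Type*} [NormedAddCommGroup E] [InnerProductSpace ℝ E]
    [CompleteSpace E] (h : E → ℝ) (x v : E) :
    (inner ℝ (gradient h x) v : ℝ) = fderiv ℝ h x v := by
  rw [gradient]
  exact InnerProductSpace.toDual_symm_apply

lemma adjoint_toEuclideanCLM' {n : Type*} [Fintype n] [DecidableEq n] (M : Matrix n n ℝ) :
    ContinuousLinearMap.adjoint (Matrix.toEuclideanCLM (𝕜 := ℝ) M)
      = Matrix.toEuclideanCLM (𝕜 := ℝ) Mᵀ := by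
  rw [← ContinuousLinearMap.star_eq_adjoint, ← map_star]
  congr 1

set_option maxHeartbeats 1000000 in
/-- the eigenvalue estimate `λ₁(A,Ω) ≥ λ₁(Ω̃)/‖J_{φ⁻¹}‖_{L^∞(Ω̃)}` expressed via
Poincaré inequalities: if `det Dφ ≥ 1/M` on `Ω` and the Poincaré inequality with constant
`1/λ` holds on `Ω̃`, then `∫_Ω |f|² ≤ (M/λ)∫_Ω ⟨A∇f,∇f⟩` for test functions on `Ω`. -/
theorem stmt7 (Ω Ω' : Set (EuclideanSpace ℝ (Fin 2))) (hΩ : IsOpen Ω) (hΩ' : IsOpen Ω')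
    (φ ψ : EuclideanSpace ℝ (Fin 2) → EuclideanSpace ℝ (Fin 2))
    (hbij : Set.BijOn φ Ω Ω') (hinv : ∀ z ∈ Ω, ψ (φ z) = z)
    (hφ : ContDiffOn ℝ 1 φ Ω) (hψ : ContDiffOn ℝ 1 ψ Ω')
    (J : EuclideanSpace ℝ (Fin 2) → Matrix (Fin 2) (Fin 2) ℝ)
    (hJ : ∀ z ∈ Ω, HasFDerivAt φ (Matrix.toEuclideanCLM (𝕜 := ℝ) (J z)) z)
    (hpos : ∀ z ∈ Ω, 0 < (J z).det)
    (A : EuclideanSpace ℝ (Fin 2) → Matrix (Fin 2) (Fin 2) ℝ)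
    (hsym : ∀ z ∈ Ω, (A z).IsSymm)
    (hagree : ∀ z ∈ Ω, J z * A z * (J z)ᵀ = (J z).det • (1 : Matrix (Fin 2) (Fin 2) ℝ))
    (M : ℝ) (hM : 0 < M) (hMdet : ∀ z ∈ Ω, 1 / M ≤ (J z).det)
    (lam : ℝ) (hlam : 0 < lam)
    (hP : ∀ g : EuclideanSpace ℝ (Fin 2) → ℝ,
      ContDiff ℝ 1 g → HasCompactSupport g → tsupport g ⊆ Ω' →
      ∫ w in Ω', |g w| ^ 2 ≤ (1 / lam) * ∫ w in Ω', ‖gradient g w‖ ^ 2)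
    (f : EuclideanSpace ℝ (Fin 2) → ℝ)
    (hf : ContDiff ℝ 1 f) (hfc : HasCompactSupport f) (hfs : tsupport f ⊆ Ω) :
    ∫ z in Ω, |f z| ^ 2 ≤
      (M / lam) * ∫ z in Ω, (inner ℝ (Matrix.toEuclideanCLM (𝕜 := ℝ) (A z) (gradient f z))
        (gradient f z) : ℝ) := by
  classical
  have hK : IsCompact (tsupport f) := hfc
  set g : EuclideanSpace ℝ (Fin 2) → ℝ := Set.indicator Ω' (fun w => f (ψ w)) with hgdef
  have hφΩ : ∀ z ∈ Ω, φ z ∈ Ω' := hbij.mapsTo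
  have hgφ : ∀ z ∈ Ω, g (φ z) = f z := by
    intro z hz
    simp only [hgdef, Set.indicator_of_mem (hφΩ z hz), hinv z hz]
  have hψΩ' : ∀ w ∈ Ω', ψ w ∈ Ω ∧ φ (ψ w) = w := by
    intro w hw
    obtain ⟨z, hz, rfl⟩ := hbij.surjOn hw
    rw [hinv z hz]; exact ⟨hz, rfl⟩
  have hKc : IsCompact (φ '' tsupport f) :=
    hK.image_of_continuousOn (hφ.continuousOn.mono hfs)
  have hKΩ' : φ '' tsupport f ⊆ Ω' := by
    rw [← hbij.image_eq]; exact Set.image_mono hfs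
  have hg0 : ∀ w ∉ φ '' tsupport f, g w = 0 := by
    intro w hw
    by_cases hw' : w ∈ Ω'
    · obtain ⟨hψm, hφψ⟩ := hψΩ' w hw'
      have hfψ : f (ψ w) = 0 := by
        by_contra h
        exact hw ⟨ψ w, subset_tsupport f h, hφψ⟩
      simp [hgdef, Set.indicator_of_mem hw', hfψ]
    · simp [hgdef, Set.indicator_of_notMem hw']
  have hgsupp : tsupport g ⊆ φ '' tsupport f := by
    apply closure_minimal _ hKc.isClosed
    intro w hw
    by_contra h
    exact hw (hg0 w h)
  have hgΩ' : tsupport g ⊆ Ω' := hgsupp.trans hKΩ'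
  have hgc : HasCompactSupport g := hKc.of_isClosed_subset isClosed_closure hgsupp
  have hgC1 : ContDiff ℝ 1 g := by
    rw [contDiff_iff_contDiffAt]
    intro x
    by_cases hx : x ∈ Ω'
    · have h1 : ContDiffAt ℝ 1 (fun w => f (ψ w)) x :=
        (hf.contDiffAt).comp x (hψ.contDiffAt (hΩ'.mem_nhds hx))
      apply h1.congr_of_eventuallyEq
      filter_upwards [hΩ'.mem_nhds hx] with y hy
      simp [hgdef, Set.indicator_of_mem hy]
    · have hx2 : x ∈ (φ '' tsupport f)ᶜ := fun h => hx (hKΩ' h)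
      have h0 : ContDiffAt ℝ 1 (fun _ => (0:ℝ)) x := contDiffAt_const
      apply h0.congr_of_eventuallyEq
      filter_upwards [hKc.isClosed.isOpen_compl.mem_nhds hx2] with y hy
      exact hg0 y hy
  -- change of variables
  have hJW : ∀ z ∈ Ω, HasFDerivWithinAt φ (Matrix.toEuclideanCLM (𝕜 := ℝ) (J z)) Ω z :=
    fun z hz => (hJ z hz).hasFDerivWithinAt
  have cov : ∀ (F : EuclideanSpace ℝ (Fin 2) → ℝ),
      ∫ w in Ω', F w = ∫ z in Ω, |(J z).det| • F (φ z) := by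
    intro F
    rw [← hbij.image_eq,
      integral_image_eq_integral_abs_det_fderiv_smul volume hΩ.measurableSet hJW hbij.injOn F]
    apply setIntegral_congr_fun hΩ.measurableSet
    intro z hz
    simp only [det_toEuclideanCLM']
  -- pointwise gradient identity
  have key : ∀ z ∈ Ω,
      gradient g (φ z)
        = Matrix.toEuclideanCLM (𝕜 := ℝ) ((J z)⁻¹)ᵀ (gradient f z) := by
    intro z hz
    have hdetne : (J z).det ≠ 0 := ne_of_gt (hpos z hz)
    have hw : φ z ∈ Ω' := hφΩ z hz
    have hψd : DifferentiableAt ℝ ψ (φ z) :=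
      (hψ.differentiableOn one_ne_zero).differentiableAt (hΩ'.mem_nhds hw)
    set B := fderiv ℝ ψ (φ z) with hBdef
    have hψB : HasFDerivAt ψ B (φ z) := hψd.hasFDerivAt
    have hcomp : HasFDerivAt (ψ ∘ φ)
        (B.comp (Matrix.toEuclideanCLM (𝕜 := ℝ) (J z))) z := hψB.comp z (hJ z hz)
    have hid : HasFDerivAt (ψ ∘ φ)
        (ContinuousLinearMap.id ℝ (EuclideanSpace ℝ (Fin 2))) z := by
      apply (hasFDerivAt_id z).congr_of_eventuallyEq
      filter_upwards [hΩ.mem_nhds hz] with y hy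
      simp only [Function.comp_apply]
      exact hinv y hy
    have hBJ : B.comp (Matrix.toEuclideanCLM (𝕜 := ℝ) (J z))
        = ContinuousLinearMap.id ℝ (EuclideanSpace ℝ (Fin 2)) := hcomp.unique hid
    have hBJ' : B * (Matrix.toEuclideanCLM (𝕜 := ℝ) (J z)) = 1 := by
      rw [ContinuousLinearMap.mul_def, ContinuousLinearMap.one_def]
      exact hBJ
    have hN : (Matrix.toEuclideanCLM (𝕜 := ℝ) (n := Fin 2)).symm B * J z = 1 := by
      have h := congrArg (Matrix.toEuclideanCLM (𝕜 := ℝ) (n := Fin 2)).symm hBJ'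
      rwa [_root_.map_mul, _root_.map_one, StarAlgEquiv.symm_apply_apply] at h
    have hBeq : B = Matrix.toEuclideanCLM (𝕜 := ℝ) (J z)⁻¹ := by
      rw [Matrix.inv_eq_left_inv hN, StarAlgEquiv.apply_symm_apply]
    have hψw : ψ (φ z) = z := hinv z hz
    have hcg : HasFDerivAt g ((fderiv ℝ f z).comp B) (φ z) := by
      have h2 : HasFDerivAt (fun w => f (ψ w)) ((fderiv ℝ f z).comp B) (φ z) := by
        have h3 := ((hf.differentiable one_ne_zero) (ψ (φ z))).hasFDerivAt.comp (φ z) hψB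
        rwa [hψw] at h3
      apply h2.congr_of_eventuallyEq
      filter_upwards [hΩ'.mem_nhds hw] with y hy
      simp [hgdef, Set.indicator_of_mem hy]
    apply ext_inner_right ℝ
    intro v
    rw [inner_grad', hcg.fderiv, ContinuousLinearMap.comp_apply, ← inner_grad',
      ← adjoint_toEuclideanCLM', ContinuousLinearMap.adjoint_inner_left, ← hBeq]
  have hpoint : ∀ z ∈ Ω, |(J z).det| • ‖gradient g (φ z)‖ ^ 2
      = (inner ℝ (Matrix.toEuclideanCLM (𝕜 := ℝ) (A z) (gradient f z)) (gradient f z) : ℝ) := by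
    intro z hz
    have hdetpos := hpos z hz
    have hdetne : (J z).det ≠ 0 := ne_of_gt hdetpos
    rw [key z hz]
    set N := (J z)⁻¹ with hNdef
    set u := gradient f z with hudef
    have h1 : N * J z = 1 := Matrix.nonsing_inv_mul _ (isUnit_iff_ne_zero.2 hdetne)
    have h2 : (J z)ᵀ * Nᵀ = 1 := by
      rw [← Matrix.transpose_mul, h1, Matrix.transpose_one]
    have hA : A z = (J z).det • (N * Nᵀ) := by
      calc A z = (N * J z) * A z * ((J z)ᵀ * Nᵀ) := by rw [h1, h2, one_mul, mul_one]
      _ = N * (J z * A z * (J z)ᵀ) * Nᵀ := by simp only [Matrix.mul_assoc]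
      _ = N * ((J z).det • (1 : Matrix (Fin 2) (Fin 2) ℝ)) * Nᵀ := by rw [hagree z hz]
      _ = (J z).det • (N * Nᵀ) := by rw [Matrix.mul_smul, Matrix.smul_mul, mul_one]
    have hadj : Matrix.toEuclideanCLM (𝕜 := ℝ) N
        = ContinuousLinearMap.adjoint (Matrix.toEuclideanCLM (𝕜 := ℝ) Nᵀ) := by
      rw [adjoint_toEuclideanCLM', Matrix.transpose_transpose]
    have hC : (inner ℝ (Matrix.toEuclideanCLM (𝕜 := ℝ) (N * Nᵀ) u) u : ℝ)
        = ‖Matrix.toEuclideanCLM (𝕜 := ℝ) Nᵀ u‖ ^ 2 := by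
      rw [_root_.map_mul, ContinuousLinearMap.mul_apply, hadj,
        ContinuousLinearMap.adjoint_inner_left, real_inner_self_eq_norm_sq]
    rw [abs_of_pos hdetpos, smul_eq_mul, ← hC, hA, _root_.map_smul,
      ContinuousLinearMap.smul_apply, real_inner_smul_left]
  have cov1 : ∫ w in Ω', |g w| ^ 2 = ∫ z in Ω, (J z).det * |f z| ^ 2 := by
    rw [cov (fun w => |g w| ^ 2)]
    apply setIntegral_congr_fun hΩ.measurableSet
    intro z hz
    simp only [hgφ z hz, smul_eq_mul, abs_of_pos (hpos z hz)]
  have cov2 : ∫ w in Ω', ‖gradient g w‖ ^ 2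
      = ∫ z in Ω, (inner ℝ (Matrix.toEuclideanCLM (𝕜 := ℝ) (A z) (gradient f z))
          (gradient f z) : ℝ) := by
    rw [cov (fun w => ‖gradient g w‖ ^ 2)]
    exact setIntegral_congr_fun hΩ.measurableSet (fun z hz => hpoint z hz)
  -- integrability and comparison on the support
  have hKm : MeasurableSet (tsupport f) := (isClosed_tsupport f).measurableSet
  have hJdetCont : ContinuousOn (fun z => (J z).det) Ω := by
    have h1 : ContinuousOn (fderiv ℝ φ) Ω := hφ.continuousOn_fderiv_of_isOpen hΩ le_rfl
    have hlin : Continuous fun T : EuclideanSpace ℝ (Fin 2) →L[ℝ] EuclideanSpace ℝ (Fin 2) =>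
        (Matrix.toEuclideanCLM (𝕜 := ℝ) (n := Fin 2)).symm T :=
      LinearMap.continuous_of_finiteDimensional
        { toFun := fun T => (Matrix.toEuclideanCLM (𝕜 := ℝ) (n := Fin 2)).symm T
          map_add' := fun a b => map_add _ a b
          map_smul' := fun c a => map_smul _ c a }
    have h2 : Continuous (fun T : EuclideanSpace ℝ (Fin 2) →L[ℝ] EuclideanSpace ℝ (Fin 2) =>
        ((Matrix.toEuclideanCLM (𝕜 := ℝ) (n := Fin 2)).symm T).det) := hlin.matrix_det
    have h3 : ContinuousOn
        (fun z => ((Matrix.toEuclideanCLM (𝕜 := ℝ) (n := Fin 2)).symm (fderiv ℝ φ z)).det) Ω :=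
      h2.comp_continuousOn h1
    apply h3.congr
    intro z hz
    simp only [(hJ z hz).fderiv, StarAlgEquiv.symm_apply_apply]
  have hfcont : Continuous fun z => |f z| ^ 2 := (hf.continuous.abs.pow 2)
  have int1 : IntegrableOn (fun z => |f z| ^ 2) (tsupport f) :=
    hfcont.continuousOn.integrableOn_compact hK
  have int2 : IntegrableOn (fun z => (J z).det * |f z| ^ 2) (tsupport f) :=
    ((hJdetCont.mono hfs).mul hfcont.continuousOn).integrableOn_compact hK
  have hf0 : ∀ x ∉ tsupport f, f x = 0 := fun x hx => image_eq_zero_of_notMem_tsupport hx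
  have e1 : ∫ z in Ω, |f z| ^ 2 = ∫ z in tsupport f, |f z| ^ 2 := by
    rw [setIntegral_eq_integral_of_forall_compl_eq_zero
        (fun x hx => by rw [hf0 x (fun h => hx (hfs h))]; simp),
      setIntegral_eq_integral_of_forall_compl_eq_zero
        (fun x hx => by rw [hf0 x hx]; simp)]
  have e2 : ∫ z in Ω, (J z).det * |f z| ^ 2 = ∫ z in tsupport f, (J z).det * |f z| ^ 2 := by
    rw [setIntegral_eq_integral_of_forall_compl_eq_zero
        (fun x hx => by rw [hf0 x (fun h => hx (hfs h))]; simp),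
      setIntegral_eq_integral_of_forall_compl_eq_zero
        (fun x hx => by rw [hf0 x hx]; simp)]
  have step : ∫ z in tsupport f, |f z| ^ 2
      ≤ M * ∫ z in tsupport f, (J z).det * |f z| ^ 2 := by
    rw [← integral_const_mul]
    apply setIntegral_mono_on int1 (int2.const_mul M) hKm
    intro z hz
    have hz' : z ∈ Ω := hfs hz
    have h1 := hMdet z hz'
    have h2 : (0:ℝ) ≤ |f z| ^ 2 := by positivity
    calc |f z| ^ 2 = M * ((1 / M) * |f z| ^ 2) := by field_simp
    _ ≤ M * ((J z).det * |f z| ^ 2) :=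
        mul_le_mul_of_nonneg_left (mul_le_mul_of_nonneg_right h1 h2) hM.le
  have hPg := hP g hgC1 hgc hgΩ'
  calc ∫ z in Ω, |f z| ^ 2 = ∫ z in tsupport f, |f z| ^ 2 := e1
  _ ≤ M * ∫ z in tsupport f, (J z).det * |f z| ^ 2 := step
  _ = M * ∫ w in Ω', |g w| ^ 2 := by rw [← e2, ← cov1]
  _ ≤ M * ((1 / lam) * ∫ w in Ω', ‖gradient g w‖ ^ 2) :=
      mul_le_mul_of_nonneg_left hPg hM.le
  _ = (M / lam) * ∫ z in Ω, (inner ℝ (Matrix.toEuclideanCLM (𝕜 := ℝ) (A z) (gradient f z))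
        (gradient f z) : ℝ) := by rw [cov2]; ring
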